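/- Let n≥3. Then for every 0<i<2^{n+1} there exists u with 0<u<2^{n+2} and u≠2^{n+1} such that the u-th term of the sequence (σ^i((ε_n 𝜀̄_n)^∞),(ε_n (𝜀̄_n)^+ 𝜀̄_n ε_n)^∞) belongs to {(1,1),(−1,−1)}. -/

import Mathlib

open scoped Pointwise ENNReal
open Filter

noncomputable section

/-- The digit set Ω₁ = {(0,0),(0,1),(1,0)} ⊆ ℝ². -/
def Omega1 : Set (ℝ × ℝ) := {((0:ℝ), (0:ℝ)), (0, 1), (1, 0)}

/-- The digit set Ω₂ = Ω₁ − Ω₁ ⊆ ℝ². -/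
def Omega2 : Set (ℝ × ℝ) :=
  {((0:ℝ), (0:ℝ)), (0, 1), (1, 0), (-1, 0), (-1, 1), (0, -1), (1, -1)}

/-- The Sierpinski gasket in base `q`. -/
def gasket (q : ℝ) : Set (ℝ × ℝ) :=
  {x | ∃ c : ℕ → ℝ × ℝ, (∀ i, c i ∈ Omega1) ∧ x = ∑' i, (q ^ (i + 1))⁻¹ • c i}

/-- `U_q`: points of `[-1/(q-1), 1/(q-1)]` having a unique `q`-expansion over `{-1,0,1}`. -/
def uniqSet (q : ℝ) : Set ℝ :=
  {s | s ∈ Set.Icc (-(1 / (q - 1))) (1 / (q - 1)) ∧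
    ∃! t : ℕ → ℝ, (∀ i, t i ∈ ({-1, 0, 1} : Set ℝ)) ∧ s = ∑' i, t i / q ^ (i + 1)}

/-- The set `T`. -/
def Tset (q : ℝ) : Set (ℝ × ℝ) :=
  {t | t ∈ gasket q - gasket q ∧ t.1 ∈ uniqSet q ∧ t.2 ∈ uniqSet q}

/-- The set `D_q` of Hausdorff dimensions of intersections. -/
def Dset (q : ℝ) : Set ℝ≥0∞ :=
  {d | ∃ t ∈ Tset q, d = dimH (gasket q ∩ ((· + t) '' gasket q))}

/-- The words `w_n` over `{0,1,2}`: `klWord 0 = w₁ = 2`,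
`w_{n+1} = (w_n ⟨reflection of w_n⟩)⁺`. -/
def klWord : ℕ → List ℕ
  | 0 => [2]
  | n + 1 =>
    let w := klWord n ++ (klWord n).map (fun x => 2 - x)
    w.dropLast ++ [w.getLast?.getD 0 + 1]

/-- `isKLBase n p`: `p ∈ (2,3)` and `1` has (greedy) expansion `w_n 0^∞` in base `p`
w.r.t. `{0,1,2}`, i.e. `p = q_n`. -/
def isKLBase (n : ℕ) (p : ℝ) : Prop :=
  p ∈ Set.Ioo (2 : ℝ) 3 ∧
    (1 : ℝ) = ∑ i ∈ Finset.range (klWord (n - 1)).length,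
      ((klWord (n - 1)).getD i 0 : ℝ) / p ^ (i + 1)

/-- `1` has a unique expansion in base `p` w.r.t. the digit set `{0,1,2}`. -/
def uniqueOneExp (p : ℝ) : Prop :=
  ∃! c : ℕ → ℕ, (∀ i, c i ≤ 2) ∧ (1 : ℝ) = ∑' i, (c i : ℝ) / p ^ (i + 1)

/-- The Thue–Morse sequence. -/
def tm : ℕ → ℕ
  | 0 => 0
  | n + 1 => if (n + 1) % 2 = 0 then tm ((n + 1) / 2) else 1 - tm ((n + 1) / 2)
decreasing_by all_goals omega

/-- `λ_i = τ_i − τ_{i−1}` (for `i ≥ 1`). -/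
def lam (i : ℕ) : ℤ := (tm i : ℤ) - (tm (i - 1) : ℤ)

/-- The word `ε_n = λ₁ ⋯ λ_{2^n}`. -/
def eps (n : ℕ) : List ℤ := (List.range (2 ^ n)).map fun i => lam (i + 1)

/-- Reflection of a word over `{-1,0,1}`: each digit `x` is replaced by `-x`. -/
def reflect (w : List ℤ) : List ℤ := w.map fun x => -x

/-- `w⁺`: the last digit is increased by `1`. -/
def plusOne (w : List ℤ) : List ℤ := w.dropLast ++ [w.getLast?.getD 0 + 1]

/-- `w⁻`: the last digit is decreased by `1`. -/
def minusOne (w : List ℤ) : List ℤ := w.dropLast ++ [w.getLast?.getD 0 - 1]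

/-- The periodic sequence `w^∞` (the `(j+1)`-st term is `per w j`). -/
def per (w : List ℤ) : ℕ → ℤ := fun j => w.getD (j % w.length) 0

/-- `EndsWith x s`: the sequence `x` ends with (has tail) the sequence `s`. -/
def EndsWith {α : Type*} (x s : ℕ → α) : Prop := ∃ k, ∀ j, x (j + k) = s j

/-- The digit set Ω₂ as a subset of ℤ × ℤ. -/
def Omega2Z : Set (ℤ × ℤ) :=
  {((0:ℤ), (0:ℤ)), (0, 1), (1, 0), (-1, 0), (-1, 1), (0, -1), (1, -1)}

/-- `E_{n,m}^i = (σ^i((ε_n ε̄_n)^∞), (ε_m ε̄_m)^∞)` (the `(j+1)`-st term is `Eseq n m i j`). -/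
def Eseq (n m i : ℕ) : ℕ → ℤ × ℤ := fun j =>
  (per (eps n ++ reflect (eps n)) (j + i), per (eps m ++ reflect (eps m)) j)


/-- `A_k = a₁ ⋯ a_{2^k}` where `a_i = λ_{2i−1}`. -/
def Aword (k : ℕ) : List ℤ := (List.range (2 ^ k)).map fun i => lam (2 * i + 1)

/-- `D_{k,k}^i = (σ^i((A_k Ā_k)^∞), (A_k Ā_k)^∞)`. -/
def Dseq (k i : ℕ) : ℕ → ℤ × ℤ := fun j =>
  (per (Aword k ++ reflect (Aword k)) (j + i), per (Aword k ++ reflect (Aword k)) j)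

/-- `U_q'`: the set of sequences over `{-1,0,1}` which are the unique `q`-expansion
of the number they represent. -/
def uniqSeqSet (q : ℝ) : Set (ℕ → ℤ) :=
  {t | (∀ i, t i ∈ ({-1, 0, 1} : Set ℤ)) ∧
    ∀ s : ℕ → ℤ, (∀ i, s i ∈ ({-1, 0, 1} : Set ℤ)) →
      (∑' i, (s i : ℝ) / q ^ (i + 1)) = (∑' i, (t i : ℝ) / q ^ (i + 1)) → s = t}

/-- `ε_{n-1} ε̄_{n-1}`, with the convention `ε_{-1} ε̄_{-1} := 00`. -/
def epsPair : ℕ → List ℤ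
  | 0 => [0, 0]
  | n + 1 => eps n ++ reflect (eps n)

/-- The finite prefix
`(ε_0 ε̄_0)^{j_0} (ε_0 ε̄_1)^{l_0} ⋯ (ε_{M-1} ε̄_{M-1})^{j_{M-1}} (ε_{M-1} ε̄_M)^{l_{M-1}}`. -/
def blockJL (j l : ℕ → ℕ) : ℕ → List ℤ
  | 0 => []
  | M + 1 => blockJL j l M
      ++ (List.replicate (j M) (eps M ++ reflect (eps M))).flatten
      ++ (List.replicate (l M) (eps M ++ reflect (eps (M + 1)))).flatten

/-- The tail of `t` starting at some position `k` follows the pattern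
`(ε_0 ε̄_0)^{j_0}(ε_0 ε̄_1)^{l_0}(ε_1 ε̄_1)^{j_1}(ε_1 ε̄_2)^{l_1}⋯`. -/
def TailFollows (t : ℕ → ℤ) (j l : ℕ → ℕ) : Prop :=
  ∃ k, ∀ M, ∀ i < (blockJL j l M).length, t (i + k) = (blockJL j l M).getD i 0

/-- As `TailFollows`, but for the reflection of the pattern. -/
def TailFollowsRefl (t : ℕ → ℤ) (j l : ℕ → ℕ) : Prop :=
  ∃ k, ∀ M, ∀ i < (blockJL j l M).length, t (i + k) = -(blockJL j l M).getD i 0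

/-- `a_n = 0 λ₁ ⋯ λ_{2^n−1}`. -/
def aword (n : ℕ) : List ℤ := 0 :: ((List.range (2 ^ n - 1)).map fun i => lam (i + 1))

/-- `b_n = (−1) λ₁ ⋯ λ_{2^n−1}`. -/
def bword (n : ℕ) : List ℤ := (-1) :: ((List.range (2 ^ n - 1)).map fun i => lam (i + 1))

/-- The transitions allowed by the matrix `A` on the alphabet `{a_n, b_n, ā_n, b̄_n}`:
`a→b, a→ā, b→ā, ā→a, ā→b̄, b̄→a`. -/
def allowedTrans (n : ℕ) (u v : List ℤ) : Prop :=
  (u = aword n ∧ (v = bword n ∨ v = reflect (aword n))) ∨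
  (u = bword n ∧ v = reflect (aword n)) ∨
  (u = reflect (aword n) ∧ (v = aword n ∨ v = reflect (bword n))) ∨
  (u = reflect (bword n) ∧ v = aword n)


lemma tm_zero : tm 0 = 0 := by rw [tm]

lemma tm_le_one : ∀ n, tm n ≤ 1 := by
  intro n
  induction n using Nat.strong_induction_on with
  | _ n ih =>
    match n with
    | 0 => simp [tm]
    | n + 1 =>
      rw [tm]
      split
      · exact ih _ (by omega)
      · omega

lemma tm_two_mul (t : ℕ) : tm (2 * t) = tm t := by
  match t with
  | 0 => rfl
  | t + 1 =>
    have : 2 * (t + 1) = (2 * t + 1) + 1 := by ring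
    rw [this, tm]
    simp only [show (2 * t + 1 + 1) % 2 = 0 by omega, if_true]
    congr 1
    omega

lemma tm_two_mul_add_one (t : ℕ) : tm (2 * t + 1) = 1 - tm t := by
  rw [tm]
  simp only [show (2 * t + 1) % 2 = 1 by omega, show (2 * t + 1) / 2 = t by omega]
  simp

lemma lam_odd (t : ℕ) : lam (2 * t + 1) = 1 ∨ lam (2 * t + 1) = -1 := by
  have h1 : tm (2 * t + 1) = 1 - tm t := tm_two_mul_add_one t
  have h2 : tm (2 * t + 1 - 1) = tm t := by
    rw [show 2 * t + 1 - 1 = 2 * t from rfl, tm_two_mul]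
  have h3 := tm_le_one t
  unfold lam
  rw [h1, h2]
  interval_cases h : tm t <;> simp [h]

lemma tm_one : tm 1 = 1 := by rw [show 1 = 2 * 0 + 1 from rfl, tm_two_mul_add_one, tm_zero]
lemma tm_two : tm 2 = 1 := by rw [show 2 = 2 * 1 from rfl, tm_two_mul, tm_one]
lemma tm_three : tm 3 = 0 := by rw [show 3 = 2 * 1 + 1 from rfl, tm_two_mul_add_one, tm_one]
lemma tm_four : tm 4 = 1 := by rw [show 4 = 2 * 2 from rfl, tm_two_mul, tm_two]

lemma lam_one : lam 1 = 1 := by unfold lam; rw [show (1:ℕ) - 1 = 0 from rfl, tm_one, tm_zero]; rfl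
lemma lam_four : lam 4 = 1 := by unfold lam; rw [show (4:ℕ) - 1 = 3 from rfl, tm_four, tm_three]; rfl

lemma eps_length (n : ℕ) : (eps n).length = 2 ^ n := by simp [eps]

lemma eps_getD (n j : ℕ) (h : j < 2 ^ n) : (eps n).getD j 0 = lam (j + 1) := by
  rw [List.getD_eq_getElem _ _ (by simpa [eps_length] using h)]
  simp [eps]

lemma reflect_length (w : List ℤ) : (reflect w).length = w.length := by simp [reflect]

lemma reflect_getD (w : List ℤ) (j : ℕ) (h : j < w.length) :
    (reflect w).getD j 0 = -(w.getD j 0) := by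
  rw [List.getD_eq_getElem _ _ (by simpa [reflect_length] using h),
    List.getD_eq_getElem _ _ h]
  simp [reflect]

lemma W1_length (n : ℕ) : (eps n ++ reflect (eps n)).length = 2 ^ (n + 1) := by
  simp [eps_length, reflect_length, pow_succ]; ring

lemma W1_getD_low (n k : ℕ) (h : k < 2 ^ n) :
    (eps n ++ reflect (eps n)).getD k 0 = lam (k + 1) := by
  rw [List.getD_append _ _ _ _ (by rw [eps_length]; exact h), eps_getD _ _ h]

lemma W1_getD_high (n k : ℕ) (h1 : 2 ^ n ≤ k) (h2 : k < 2 ^ (n + 1)) :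
    (eps n ++ reflect (eps n)).getD k 0 = -lam (k - 2 ^ n + 1) := by
  rw [List.getD_append_right _ _ _ _ (by rw [eps_length]; exact h1), eps_length,
    reflect_getD _ _ (by rw [eps_length]; omega), eps_getD _ _ (by omega)]

lemma W1_pm (n k : ℕ) (hn : 1 ≤ n) (h : k < 2 ^ (n + 1)) (he : k % 2 = 0) :
    (eps n ++ reflect (eps n)).getD k 0 = 1 ∨
      (eps n ++ reflect (eps n)).getD k 0 = -1 := by
  rcases lt_or_ge k (2 ^ n) with hk | hk
  · rw [W1_getD_low _ _ hk, show k + 1 = 2 * (k / 2) + 1 by omega]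
    exact lam_odd (k / 2)
  · rw [W1_getD_high _ _ hk h]
    have h2 : 2 ^ n % 2 = 0 := by
      rcases Nat.exists_eq_add_of_le hn with ⟨m, rfl⟩
      simp [pow_succ, Nat.mul_mod]
    have := lam_odd ((k - 2 ^ n) / 2)
    rw [show 2 * ((k - 2 ^ n) / 2) + 1 = k - 2 ^ n + 1 by omega] at this
    rcases this with h' | h'
    · right; rw [h']
    · left; rw [h']; ring

lemma plusOne_length (w : List ℤ) (h : w ≠ []) : (plusOne w).length = w.length := by
  have := List.length_pos_iff.mpr h
  simp [plusOne]
  omega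

lemma plusOne_getD (w : List ℤ) (j : ℕ) (h : j < w.length - 1) :
    (plusOne w).getD j 0 = w.getD j 0 := by
  rw [plusOne, List.getD_append _ _ _ _ (by simpa using h),
    List.getD_eq_getElem _ _ (by simpa using h),
    List.getD_eq_getElem _ _ (by omega), List.getElem_dropLast]

lemma epsW2 (n : ℕ) :
    eps n ++ plusOne (reflect (eps n)) ++ reflect (eps n) ++ eps n =
      ((eps n ++ plusOne (reflect (eps n))) ++ reflect (eps n)) ++ eps n := rfl

lemma reflect_eps_ne (n : ℕ) : reflect (eps n) ≠ [] := by
  have : (reflect (eps n)).length = 2 ^ n := by rw [reflect_length, eps_length]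
  intro h; rw [h] at this; simp at this
  have : 0 < 2 ^ n := Nat.pow_pos (by norm_num)
  omega

lemma AB_length (n : ℕ) : (eps n ++ plusOne (reflect (eps n))).length = 2 ^ (n + 1) := by
  rw [List.length_append, eps_length, plusOne_length _ (reflect_eps_ne n), reflect_length,
    eps_length, pow_succ]
  ring

lemma W2_length (n : ℕ) :
    (eps n ++ plusOne (reflect (eps n)) ++ reflect (eps n) ++ eps n).length = 2 ^ (n + 2) := by
  rw [epsW2, List.length_append, List.length_append, AB_length, reflect_length, eps_length]
  rw [pow_succ, pow_succ]; ring

lemma W2_low (n j : ℕ) (h : j < 2 ^ (n + 1) - 1) :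
    (eps n ++ plusOne (reflect (eps n)) ++ reflect (eps n) ++ eps n).getD j 0 =
      (eps n ++ reflect (eps n)).getD j 0 := by
  have hp : 0 < 2 ^ n := Nat.pow_pos (by norm_num)
  have hps : 2 ^ (n + 1) = 2 ^ n + 2 ^ n := by rw [pow_succ]; ring
  rw [epsW2, List.getD_append _ _ _ _ (by rw [List.length_append, AB_length, reflect_length, eps_length]; omega),
    List.getD_append _ _ _ _ (by rw [AB_length]; omega)]
  rcases lt_or_ge j (2 ^ n) with hj | hj
  · rw [List.getD_append _ _ _ _ (by rw [eps_length]; exact hj),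
      List.getD_append _ _ _ _ (by rw [eps_length]; exact hj)]
  · rw [List.getD_append_right _ _ _ _ (by rw [eps_length]; exact hj),
      List.getD_append_right _ _ _ _ (by rw [eps_length]; exact hj), eps_length,
      plusOne_getD _ _ (by rw [reflect_length, eps_length]; omega)]

lemma W2_high (n m : ℕ) (h : m < 2 ^ (n + 1)) :
    (eps n ++ plusOne (reflect (eps n)) ++ reflect (eps n) ++ eps n).getD (2 ^ (n + 1) + m) 0 =
      -((eps n ++ reflect (eps n)).getD m 0) := by
  have hp : 0 < 2 ^ n := Nat.pow_pos (by norm_num)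
  have hps : 2 ^ (n + 1) = 2 ^ n + 2 ^ n := by rw [pow_succ]; ring
  rcases lt_or_ge m (2 ^ n) with hj | hj
  · rw [epsW2, List.getD_append _ _ _ _
      (by rw [List.length_append, AB_length, reflect_length, eps_length]; omega),
      List.getD_append_right _ _ _ _ (by rw [AB_length]; omega), AB_length,
      Nat.add_sub_cancel_left, reflect_getD _ _ (by rw [eps_length]; exact hj),
      eps_getD _ _ hj, W1_getD_low _ _ hj]
  · rw [epsW2, List.getD_append_right _ _ _ _
      (by rw [List.length_append, AB_length, reflect_length, eps_length]; omega),
      List.length_append, AB_length, reflect_length, eps_length,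
      show 2 ^ (n + 1) + m - (2 ^ (n + 1) + 2 ^ n) = m - 2 ^ n by omega,
      eps_getD _ _ (by omega), W1_getD_high _ _ hj h]
    ring

lemma key (n i : ℕ) (hn : 3 ≤ n) (m : ℕ) (hm : m + 1 < 2 ^ (n + 1)) (hme : m % 2 = 0)
    (hgk : (eps n ++ reflect (eps n)).getD ((m + i) % 2 ^ (n + 1)) 0 = 1 ∨
      (eps n ++ reflect (eps n)).getD ((m + i) % 2 ^ (n + 1)) 0 = -1)
    (hgm : (eps n ++ reflect (eps n)).getD m 0 = 1 ∨
      (eps n ++ reflect (eps n)).getD m 0 = -1) :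
    ∃ u, 0 < u ∧ u < 2 ^ (n + 2) ∧ u ≠ 2 ^ (n + 1) ∧
      (per (eps n ++ reflect (eps n)) ((u - 1) + i),
        per (eps n ++ plusOne (reflect (eps n)) ++ reflect (eps n) ++ eps n)
          (u - 1)) ∈ ({(1, 1), (-1, -1)} : Set (ℤ × ℤ)) := by
  have h2e : 2 ^ (n + 1) % 2 = 0 := by simp [pow_succ]
  have h16 : 16 ≤ 2 ^ (n + 1) := by
    calc (16 : ℕ) = 2 ^ 4 := by norm_num
    _ ≤ 2 ^ (n + 1) := Nat.pow_le_pow_right (by norm_num) (by omega)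
  have hdd : 2 ^ (n + 2) = 2 * 2 ^ (n + 1) := by ring
  have pW1 : ∀ j, per (eps n ++ reflect (eps n)) j =
      (eps n ++ reflect (eps n)).getD (j % 2 ^ (n + 1)) 0 := by
    intro j; simp only [per, W1_length]
  have pW2 : ∀ j, per (eps n ++ plusOne (reflect (eps n)) ++ reflect (eps n) ++ eps n) j =
      (eps n ++ plusOne (reflect (eps n)) ++ reflect (eps n) ++ eps n).getD
        (j % 2 ^ (n + 2)) 0 := by
    intro j; simp only [per, W2_length]
  have hlow : per (eps n ++ plusOne (reflect (eps n)) ++ reflect (eps n) ++ eps n) m =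
      (eps n ++ reflect (eps n)).getD m 0 := by
    rw [pW2, Nat.mod_eq_of_lt (by omega), W2_low _ _ (by omega)]
  have hhigh : per (eps n ++ plusOne (reflect (eps n)) ++ reflect (eps n) ++ eps n)
      (2 ^ (n + 1) + m) = -((eps n ++ reflect (eps n)).getD m 0) := by
    rw [pW2, Nat.mod_eq_of_lt (by omega), W2_high _ _ (by omega)]
  have hW1a : per (eps n ++ reflect (eps n)) (m + i) =
      (eps n ++ reflect (eps n)).getD ((m + i) % 2 ^ (n + 1)) 0 := pW1 _
  have hW1b : per (eps n ++ reflect (eps n)) (2 ^ (n + 1) + m + i) =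
      (eps n ++ reflect (eps n)).getD ((m + i) % 2 ^ (n + 1)) 0 := by
    rw [pW1, add_assoc, Nat.add_mod_left]
  rcases hgk with h1 | h1 <;> rcases hgm with h2 | h2
  · refine ⟨m + 1, by omega, by omega, by omega, ?_⟩
    simp only [Nat.add_sub_cancel, Set.mem_insert_iff, Set.mem_singleton_iff, Prod.mk.injEq]
    left
    exact ⟨by rw [hW1a] at *; omega, by rw [hlow]; omega⟩
  · refine ⟨2 ^ (n + 1) + m + 1, by omega, by omega, by omega, ?_⟩
    simp only [Nat.add_sub_cancel, Set.mem_insert_iff, Set.mem_singleton_iff, Prod.mk.injEq]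
    left
    exact ⟨by rw [hW1b]; omega, by rw [hhigh]; omega⟩
  · refine ⟨2 ^ (n + 1) + m + 1, by omega, by omega, by omega, ?_⟩
    simp only [Nat.add_sub_cancel, Set.mem_insert_iff, Set.mem_singleton_iff, Prod.mk.injEq]
    right
    exact ⟨by rw [hW1b]; omega, by rw [hhigh]; omega⟩
  · refine ⟨m + 1, by omega, by omega, by omega, ?_⟩
    simp only [Nat.add_sub_cancel, Set.mem_insert_iff, Set.mem_singleton_iff, Prod.mk.injEq]
    right
    exact ⟨by rw [hW1a]; omega, by rw [hlow]; omega⟩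


theorem stmt11 (n : ℕ) (hn : 3 ≤ n) (i : ℕ) (hi0 : 0 < i) (hi1 : i < 2 ^ (n + 1)) :
    ∃ u, 0 < u ∧ u < 2 ^ (n + 2) ∧ u ≠ 2 ^ (n + 1) ∧
      (per (eps n ++ reflect (eps n)) ((u - 1) + i),
        per (eps n ++ plusOne (reflect (eps n)) ++ reflect (eps n) ++ eps n)
          (u - 1)) ∈ ({(1, 1), (-1, -1)} : Set (ℤ × ℤ)) := by
  have h2e : 2 ^ (n + 1) % 2 = 0 := by simp [pow_succ]
  have h16 : 16 ≤ 2 ^ (n + 1) := by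
    calc (16 : ℕ) = 2 ^ 4 := by norm_num
    _ ≤ 2 ^ (n + 1) := Nat.pow_le_pow_right (by norm_num) (by omega)
  have h8 : 8 ≤ 2 ^ n := by
    calc (8 : ℕ) = 2 ^ 3 := by norm_num
    _ ≤ 2 ^ n := Nat.pow_le_pow_right (by norm_num) hn
  rcases Nat.even_or_odd i with hi | hi
  · -- i even: take m = 0
    have hie : i % 2 = 0 := Nat.even_iff.mp hi
    apply key n i hn 0 (by omega) (by omega)
    · rw [Nat.zero_add, Nat.mod_eq_of_lt hi1]
      exact W1_pm n i (by omega) hi1 hie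
    · left
      rw [W1_getD_low _ _ (by omega), lam_one]
  · -- i odd
    have hio : i % 2 = 1 := Nat.odd_iff.mp hi
    obtain ⟨m, hm1, hme, hk3⟩ :
        ∃ m, m + 1 < 2 ^ (n + 1) ∧ m % 2 = 0 ∧ (m + i) % 2 ^ (n + 1) = 3 := by
      rcases le_or_gt i 3 with h | h
      · exact ⟨3 - i, by omega, by omega,
          by rw [show 3 - i + i = 3 by omega]; exact Nat.mod_eq_of_lt (by omega)⟩
      · exact ⟨2 ^ (n + 1) + 3 - i, by omega, by omega,
          by rw [show 2 ^ (n + 1) + 3 - i + i = 2 ^ (n + 1) + 3 by omega, Nat.add_mod_left]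
             exact Nat.mod_eq_of_lt (by omega)⟩
    apply key n i hn m hm1 hme
    · rw [hk3]
      left
      rw [W1_getD_low _ _ (by omega)]
      exact lam_four
    · exact W1_pm n m (by omega) (by omega) hme


end
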